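/- Let X = C([0,1]) with the supremum norm, C = {f ∈ X : f(0) = 0 ≤ f(t) ≤ f(1) = 1 for all t ∈ [0,1]}, and T : C → C given by (Tf)(t) = t·f(t). Then T is a (c)-mapping with no fixed point in C, 0 belongs to the norm closure of R(T − I) = {Tf − f : f ∈ C}, and for every f ∈ C, limₙ ‖Tⁿf‖/n = 0 while 0 ∉ R(I − T). -/

import Mathlib

open ContinuousMap

/-- The multiplication operator `(Tf)(t) = t·f(t)` on `C([0,1])`. -/
noncomputable def mulT : C(Set.Icc (0:ℝ) 1, ℝ) → C(Set.Icc (0:ℝ) 1, ℝ) :=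
  fun f => ⟨fun t => (t : ℝ) * f t, continuous_subtype_val.mul f.continuous⟩

/-- The set `C = {f ∈ C([0,1]) : f(0) = 0 ≤ f(t) ≤ f(1) = 1}`. -/
def Cone : Set C(Set.Icc (0:ℝ) 1, ℝ) :=
  {f | f ⟨0, by norm_num⟩ = 0 ∧ (∀ t, 0 ≤ f t ∧ f t ≤ 1) ∧ f ⟨1, by norm_num⟩ = 1}

lemma mulT_apply (f : C(Set.Icc (0:ℝ) 1, ℝ)) (x : Set.Icc (0:ℝ) 1) :
    mulT f x = (x : ℝ) * f x := rfl

lemma mapsTo_mulT : Set.MapsTo mulT Cone Cone := by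
  rintro f ⟨h0, hb, h1⟩
  refine ⟨by simp [mulT_apply, h0], fun t => ?_, ?_⟩
  · have ht0 : (0:ℝ) ≤ (t:ℝ) := t.2.1
    have ht1 : (t:ℝ) ≤ 1 := t.2.2
    have := hb t
    refine ⟨mul_nonneg ht0 this.1, ?_⟩
    calc (t:ℝ) * f t ≤ 1 * 1 := mul_le_mul ht1 this.2 this.1 (by norm_num)
      _ = 1 := by norm_num
  · show ((⟨1, by norm_num⟩ : Set.Icc (0:ℝ) 1) : ℝ) * f ⟨1, by norm_num⟩ = 1
    rw [show ((⟨1, by norm_num⟩ : Set.Icc (0:ℝ) 1) : ℝ) = 1 from rfl, one_mul]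
    exact h1

lemma one_div_add_two_tendsto : Filter.Tendsto (fun n : ℕ => (1:ℝ)/(n+2))
    Filter.atTop (nhds 0) := by
  apply squeeze_zero (fun n => by positivity) (g := fun n : ℕ => 1/(n+1))
  · intro n
    apply div_le_div_of_nonneg_left one_pos.le (by positivity)
    linarith [Nat.cast_nonneg (α := ℝ) n]
  · exact tendsto_one_div_add_atTop_nhds_zero_nat

lemma no_fixed : ∀ f ∈ Cone, mulT f ≠ f := by
  rintro f ⟨h0, hb, h1⟩ heq
  have hzero : ∀ x : Set.Icc (0:ℝ) 1, (x:ℝ) ≠ 1 → f x = 0 := by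
    intro x hx
    have hx' : (x:ℝ) * f x = f x := by
      have := congrArg (fun g : C(Set.Icc (0:ℝ) 1, ℝ) => g x) heq
      simpa [mulT_apply] using this
    have h2 : ((x:ℝ) - 1) * f x = 0 := by linarith
    rcases mul_eq_zero.1 h2 with h | h
    · exact absurd (by linarith : (x:ℝ) = 1) hx
    · exact h
  set one : Set.Icc (0:ℝ) 1 := ⟨1, by norm_num⟩ with hone_def
  have hmem : ∀ n : ℕ, (1 - 1/(n+2) : ℝ) ∈ Set.Icc (0:ℝ) 1 := by
    intro n
    constructor
    · have : (1:ℝ)/(n+2) ≤ 1 := by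
        rw [div_le_one (by positivity)]; linarith [Nat.cast_nonneg (α := ℝ) n]
      linarith
    · have : (0:ℝ) < 1/(n+2) := by positivity
      linarith
  set s : ℕ → Set.Icc (0:ℝ) 1 := fun n => ⟨1 - 1/(n+2), hmem n⟩ with hs_def
  have hs : Filter.Tendsto s Filter.atTop (nhds one) := by
    rw [tendsto_subtype_rng]
    have := one_div_add_two_tendsto.const_sub 1
    simpa [hs_def, hone_def] using this
  have hfs : Filter.Tendsto (fun n => f (s n)) Filter.atTop (nhds (f one)) :=
    (f.continuous.tendsto one).comp hs
  have hfs0 : ∀ n, f (s n) = 0 := by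
    intro n
    apply hzero
    show (1 - 1/(n+2) : ℝ) ≠ 1
    intro h
    have h2 : (1:ℝ)/(n+2) = 0 := by linarith
    have : (0:ℝ) < 1/(n+2) := by positivity
    linarith
  have htend0 : Filter.Tendsto (fun _ : ℕ => (0:ℝ)) Filter.atTop (nhds (f one)) := by
    simpa [hfs0] using hfs
  have hfo : f one = 0 := tendsto_nhds_unique htend0 tendsto_const_nhds
  have hfo1 : f one = 1 := h1
  rw [hfo] at hfo1
  norm_num at hfo1

lemma norm_le_one_of_cone {f : C(Set.Icc (0:ℝ) 1, ℝ)} (hf : f ∈ Cone) : ‖f‖ ≤ 1 := by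
  rw [ContinuousMap.norm_le _ zero_le_one]
  intro x
  have := hf.2.1 x
  rw [Real.norm_eq_abs, abs_le]
  exact ⟨by linarith [this.1], this.2⟩

lemma pow_one_sub_le (t : ℝ) (ht0 : 0 ≤ t) (ht1 : t ≤ 1) (m : ℕ) :
    t ^ m * (1 - t) ≤ 1 / (m + 1) := by
  rw [le_div_iff₀ (by positivity)]
  have h1 : ((m:ℝ) + 1) * t ^ m ≤ ∑ i ∈ Finset.range (m + 1), t ^ i := by
    have hsum : ∑ i ∈ Finset.range (m + 1), t ^ m = ((m:ℝ) + 1) * t ^ m := by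
      rw [Finset.sum_const, Finset.card_range, nsmul_eq_mul]; push_cast; ring
    rw [← hsum]
    apply Finset.sum_le_sum
    intro i hi
    exact pow_le_pow_of_le_one ht0 ht1 (Nat.le_of_lt_succ (Finset.mem_range.1 hi))
  have h2 : (∑ i ∈ Finset.range (m + 1), t ^ i) * (1 - t) = 1 - t ^ (m + 1) := by
    have := geom_sum_mul t (m + 1)
    nlinarith [this]
  have h3 : (0:ℝ) ≤ t ^ (m + 1) := by positivity
  nlinarith [mul_le_mul_of_nonneg_right h1 (by linarith : (0:ℝ) ≤ 1 - t)]

/-- On `C = {f : f(0) = 0 ≤ f ≤ f(1) = 1}`, the map `Tf = t·f` is a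
(c)-mapping with no fixed point, `0 ∈ closure R(T - I)`, `‖Tⁿf‖/n → 0` for every
`f ∈ C`, yet `0 ∉ R(I - T)`. -/
theorem mulT_on_Cone_properties :
    Set.MapsTo mulT Cone Cone ∧
    (∃ a c : ℝ, a ∈ Set.Icc (0:ℝ) 1 ∧ c ∈ Set.Icc (0:ℝ) 1 ∧ 0 < c ∧ a + 2 * c = 1 ∧
      ∀ f ∈ Cone, ∀ g ∈ Cone,
        ‖mulT f - mulT g‖ ≤ a * ‖f - g‖ + c * (‖mulT f - g‖ + ‖mulT g - f‖)) ∧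
    (∀ f ∈ Cone, mulT f ≠ f) ∧
    ((0 : C(Set.Icc (0:ℝ) 1, ℝ)) ∈
      closure {g : C(Set.Icc (0:ℝ) 1, ℝ) | ∃ f ∈ Cone, g = mulT f - f}) ∧
    (∀ f ∈ Cone, Filter.Tendsto (fun n : ℕ => ‖mulT^[n] f‖ / n)
      Filter.atTop (nhds 0)) ∧
    ((0 : C(Set.Icc (0:ℝ) 1, ℝ)) ∉
      {g : C(Set.Icc (0:ℝ) 1, ℝ) | ∃ f ∈ Cone, g = f - mulT f}) := by
  refine ⟨mapsTo_mulT, ?_, no_fixed, ?_, ?_, ?_⟩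
  · -- (c)-mapping with a = 0, c = 1/2
    refine ⟨0, 1/2, by norm_num, by norm_num, by norm_num, by norm_num, ?_⟩
    intro f _ g _
    have hAB : (0:ℝ) ≤ ‖mulT f - g‖ + ‖mulT g - f‖ :=
      add_nonneg (norm_nonneg _) (norm_nonneg _)
    rw [zero_mul, zero_add]
    rw [ContinuousMap.norm_le _ (by positivity)]
    intro x
    have hx0 : (0:ℝ) ≤ (x:ℝ) := x.2.1
    have hx1 : (x:ℝ) ≤ 1 := x.2.2
    have hu : |(x:ℝ) * f x - g x| ≤ ‖mulT f - g‖ := by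
      have := (mulT f - g).norm_coe_le_norm x
      simpa [mulT_apply, Real.norm_eq_abs] using this
    have hv : |(x:ℝ) * g x - f x| ≤ ‖mulT g - f‖ := by
      have := (mulT g - f).norm_coe_le_norm x
      simpa [mulT_apply, Real.norm_eq_abs] using this
    have hval : ‖(mulT f - mulT g) x‖ = |(x:ℝ) * (f x - g x)| := by
      simp [mulT_apply, Real.norm_eq_abs, mul_sub]
    rw [hval]
    have habs : |(x:ℝ) * (f x - g x)| = (x:ℝ) * |f x - g x| := by
      rw [abs_mul, abs_of_nonneg hx0]
    have hsum : (1 + (x:ℝ)) * |f x - g x| ≤ ‖mulT f - g‖ + ‖mulT g - f‖ := by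
      have heq : (1 + (x:ℝ)) * (f x - g x) = ((x:ℝ) * f x - g x) - ((x:ℝ) * g x - f x) := by
        ring
      calc (1 + (x:ℝ)) * |f x - g x| = |(1 + (x:ℝ)) * (f x - g x)| := by
            rw [abs_mul, abs_of_nonneg (show (0:ℝ) ≤ 1 + (x:ℝ) by linarith)]
        _ = |((x:ℝ) * f x - g x) - ((x:ℝ) * g x - f x)| := by rw [heq]
        _ ≤ |(x:ℝ) * f x - g x| + |(x:ℝ) * g x - f x| := abs_sub _ _
        _ ≤ ‖mulT f - g‖ + ‖mulT g - f‖ := add_le_add hu hv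
    rw [habs]
    nlinarith [mul_nonneg (show (0:ℝ) ≤ 1 - (x:ℝ) by linarith) (abs_nonneg (f x - g x))]
  · -- 0 ∈ closure
    set F : ℕ → C(Set.Icc (0:ℝ) 1, ℝ) := fun n =>
      ⟨fun t => (t:ℝ) ^ (n+1), continuous_subtype_val.pow (n+1)⟩ with hF_def
    have hmemCone : ∀ n : ℕ, F n ∈ Cone := by
      intro n
      refine ⟨?_, fun t => ?_, ?_⟩
      · show ((⟨0, by norm_num⟩ : Set.Icc (0:ℝ) 1) : ℝ) ^ (n+1) = 0
        norm_num
      · show 0 ≤ ((t:ℝ)) ^ (n+1) ∧ ((t:ℝ)) ^ (n+1) ≤ 1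
        exact ⟨pow_nonneg t.2.1 _, pow_le_one₀ t.2.1 t.2.2⟩
      · show ((⟨1, by norm_num⟩ : Set.Icc (0:ℝ) 1) : ℝ) ^ (n+1) = 1
        norm_num
    apply mem_closure_of_tendsto (f := fun n : ℕ => mulT (F n) - F n) (b := Filter.atTop)
    · rw [tendsto_zero_iff_norm_tendsto_zero]
      apply squeeze_zero (fun n => norm_nonneg _) (g := fun n : ℕ => 1/(n+2))
      · intro n
        rw [ContinuousMap.norm_le _ (by positivity)]
        intro x
        have hx0 : (0:ℝ) ≤ (x:ℝ) := x.2.1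
        have hx1 : (x:ℝ) ≤ 1 := x.2.2
        have hxn : (0:ℝ) ≤ (x:ℝ)^(n+1) := by positivity
        have hxn1 : (x:ℝ)^(n+1) ≤ 1 := pow_le_one₀ hx0 hx1
        have hval : ‖(mulT (F n) - F n) x‖ = (x:ℝ)^(n+1) * (1 - (x:ℝ)) := by
          show |(x:ℝ) * (x:ℝ)^(n+1) - (x:ℝ)^(n+1)| = _
          rw [abs_of_nonpos (by nlinarith : (x:ℝ) * (x:ℝ)^(n+1) - (x:ℝ)^(n+1) ≤ 0)]
          ring
        rw [hval]
        calc (x:ℝ)^(n+1) * (1 - (x:ℝ)) ≤ 1/((n+1:ℕ)+1) :=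
              pow_one_sub_le _ hx0 hx1 (n+1)
          _ ≤ 1/(n+2) := by push_cast; rw [show ((n:ℝ)+1+1) = (n:ℝ)+2 by ring]
      · exact one_div_add_two_tendsto
    · filter_upwards with n
      exact ⟨F n, hmemCone n, rfl⟩
  · -- Tendsto ‖Tⁿf‖/n → 0
    intro f hf
    have hiter : ∀ n : ℕ, mulT^[n] f ∈ Cone := fun n =>
      Set.MapsTo.iterate mapsTo_mulT n hf
    apply squeeze_zero (g := fun n : ℕ => 1/(n:ℝ))
    · intro n; positivity
    · intro n
      rcases Nat.eq_zero_or_pos n with h | h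
      · simp [h]
      · have hn : (0:ℝ) < n := by exact_mod_cast h
        exact div_le_div₀ zero_le_one (norm_le_one_of_cone (hiter n)) hn le_rfl
    · exact tendsto_one_div_atTop_nhds_zero_nat
  · -- 0 ∉ R(I - T)
    rintro ⟨f, hf, heq⟩
    apply no_fixed f hf
    rw [eq_comm, sub_eq_zero] at heq
    exact heq.symm
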